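/- Let (X, 𝔅, μ) be a probability space, b ∈ (1, ∞), γ > −1, and let L : (0, ∞) → (0, ∞) be a continuous slowly varying function (i.e. for every c > 0, L(cx)/L(x) → 1 as x → ∞). Suppose f : X → ℝ is measurable and |f|_p ≤ (b − p)^{−(γ+1)/b} · L(1/(b − p))^{1/b} for every p ∈ [1, b). Then there exists a constant C = C(b, γ, L) > 0 such that μ{x : |f(x)| ≥ y} ≤ C · y^{−b} (ln y)^{γ+1} L(ln y) for all y ≥ e. -/

import Mathlib

open MeasureTheory ENNReal Real Set Filter

/-- Eventual lower bound `m / t ≤ L t` for a positive continuous function with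
`L (2x) / L x → 1`. -/
lemma aux_slow_lower (L : ℝ → ℝ) (hLpos : ∀ x : ℝ, 0 < x → 0 < L x)
    (hLcont : ContinuousOn L (Set.Ioi 0))
    (h2 : Filter.Tendsto (fun x : ℝ => L (2 * x) / L x) Filter.atTop (nhds 1)) :
    ∃ t₀ m : ℝ, 1 ≤ t₀ ∧ 0 < m ∧ ∀ t, t₀ ≤ t → m / t ≤ L t := by
  have hev : ∀ᶠ x in Filter.atTop, (1:ℝ)/2 < L (2 * x) / L x :=
    h2.eventually (eventually_gt_nhds (by norm_num))
  obtain ⟨x₀, hx₀⟩ := Filter.eventually_atTop.mp hev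
  set t₀ := max x₀ 1 with ht₀def
  have ht₀1 : (1:ℝ) ≤ t₀ := le_max_right _ _
  have hhalf : ∀ x, t₀ ≤ x → L x ≤ 2 * L (2 * x) := by
    intro x hx
    have hx1 : (1:ℝ) ≤ x := le_trans ht₀1 hx
    have hLx : 0 < L x := hLpos x (by linarith)
    have h := hx₀ x (le_trans (le_max_left _ _) hx)
    rw [lt_div_iff₀ hLx] at h
    linarith
  -- min of L on [t₀, 2 t₀]
  have hsub : Set.Icc t₀ (2 * t₀) ⊆ Set.Ioi 0 := by
    intro x hx
    have := hx.1
    simp only [Set.mem_Ioi]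
    linarith
  have hne : (Set.Icc t₀ (2 * t₀)).Nonempty := ⟨t₀, by constructor <;> nlinarith⟩
  obtain ⟨z, hz, hzmin⟩ := isCompact_Icc.exists_isMinOn hne (hLcont.mono hsub)
  have hz1 : (1:ℝ) ≤ z := le_trans ht₀1 (Set.mem_Icc.mp hz).1
  have hm' : 0 < L z := hLpos z (by linarith)
  have claim : ∀ n : ℕ, ∀ t, t₀ ≤ t → t ≤ 2 ^ n * (2 * t₀) → L z * t₀ / t ≤ L t := by
    intro n
    induction n with
    | zero =>
      intro t ht htle
      rw [pow_zero, one_mul] at htle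
      have ht0 : 0 < t := by linarith
      have hLt : L z ≤ L t := hzmin (Set.mem_Icc.mpr ⟨ht, htle⟩)
      rw [div_le_iff₀ ht0]
      nlinarith
    | succ n ih =>
      intro t ht htle
      by_cases hc : t ≤ 2 * t₀
      · have ht0 : 0 < t := by linarith
        have hLt : L z ≤ L t := hzmin (Set.mem_Icc.mpr ⟨ht, hc⟩)
        rw [div_le_iff₀ ht0]
        nlinarith
      · push_neg at hc
        have ht0 : 0 < t := by linarith
        have h1 : t₀ ≤ t / 2 := by linarith
        have h2' : t / 2 ≤ 2 ^ n * (2 * t₀) := by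
          rw [pow_succ] at htle
          linarith
        have hih := ih (t / 2) h1 h2'
        have hh := hhalf (t / 2) h1
        have he : 2 * (t / 2) = t := by ring
        rw [he] at hh
        have e1 : L z * t₀ / (t / 2) = 2 * (L z * t₀ / t) := by
          field_simp
        rw [e1] at hih
        linarith
  refine ⟨t₀, L z * t₀, ht₀1, by positivity, fun t ht => ?_⟩
  obtain ⟨n, hn⟩ := pow_unbounded_of_one_lt t (by norm_num : (1:ℝ) < 2)
  refine claim n t ht ?_
  have h2n : (0:ℝ) < 2 ^ n := by positivity
  nlinarith

theorem moment_to_tail_bounded_support {X : Type*} [MeasurableSpace X]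
    (μ : Measure X) [IsProbabilityMeasure μ]
    (b γ : ℝ) (hb : 1 < b) (hγ : -1 < γ)
    (L : ℝ → ℝ) (hLpos : ∀ x : ℝ, 0 < x → 0 < L x)
    (hLcont : ContinuousOn L (Set.Ioi 0))
    (hLslow : ∀ c : ℝ, 0 < c →
      Filter.Tendsto (fun x : ℝ => L (c * x) / L x) Filter.atTop (nhds 1))
    (f : X → ℝ) (hf : Measurable f)
    (hmom : ∀ p : ℝ, 1 ≤ p → p < b →
      eLpNorm f (ENNReal.ofReal p) μ ≤
        ENNReal.ofReal ((b - p) ^ (-((γ + 1) / b)) * L (1 / (b - p)) ^ (1 / b))) :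
    ∃ C : ℝ, 0 < C ∧ ∀ y : ℝ, Real.exp 1 ≤ y →
      μ {x | y ≤ |f x|} ≤
        ENNReal.ofReal (C * y ^ (-b) * Real.log y ^ (γ + 1) * L (Real.log y)) := by
  have hb0 : (0:ℝ) < b := by linarith
  have hγ1 : (0:ℝ) < γ + 1 := by linarith
  -- eventual lower bound on L
  obtain ⟨t₀, m, ht₀1, hm, hlow⟩ :=
    aux_slow_lower L hLpos hLcont (hLslow 2 (by norm_num))
  -- threshold
  set T : ℝ := max (max 1 t₀) (1 / (b - 1)) with hTdef
  have hT1 : (1:ℝ) ≤ T := le_trans (le_max_left _ _) (le_max_left _ _)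
  have hTt₀ : t₀ ≤ T := le_trans (le_max_right _ _) (le_max_left _ _)
  have hTb : 1 / (b - 1) ≤ T := le_max_right _ _
  clear_value T
  -- constant for the large range
  set K : ℝ := Real.exp ((1 + |Real.log m|) / b) with hKdef
  have hK : 0 < K := Real.exp_pos _
  clear_value K
  -- min of the target function on [1, T]
  set g : ℝ → ℝ := fun t => Real.exp (-(b * t)) * t ^ (γ + 1) * L t with hgdef
  have hgcont : ContinuousOn g (Set.Icc 1 T) := by
    have hsub : Set.Icc (1:ℝ) T ⊆ Set.Ioi 0 := fun x hx => by
      have := hx.1; simp only [Set.mem_Ioi]; linarith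
    apply ContinuousOn.mul
    apply ContinuousOn.mul
    · exact (Real.continuous_exp.comp (continuous_const.mul continuous_id).neg).continuousOn
    · exact continuousOn_id.rpow_const fun x hx => Or.inl (by have := hx.1; positivity)
    · exact hLcont.mono hsub
  obtain ⟨z, hzmem, hzmin⟩ := isCompact_Icc.exists_isMinOn ⟨1, by
    constructor <;> simp [hT1]⟩ hgcont
  have hgz : 0 < g z := by
    have hz1 : (1:ℝ) ≤ z := (Set.mem_Icc.mp hzmem).1
    have := hLpos z (by linarith)
    simp only [hgdef]
    positivity
  -- the final constant
  refine ⟨max (Real.exp 1 * K) (1 / g z), lt_max_iff.mpr (Or.inl (by positivity)), ?_⟩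
  set C : ℝ := max (Real.exp 1 * K) (1 / g z) with hCdef
  have hCK : Real.exp 1 * K ≤ C := le_max_left _ _
  have hCg : 1 / g z ≤ C := le_max_right _ _
  clear_value C
  intro y hy
  have hy0 : (0:ℝ) < y := lt_of_lt_of_le (Real.exp_pos 1) hy
  set t : ℝ := Real.log y with htdef
  clear_value t
  have ht1 : (1:ℝ) ≤ t := by
    rw [htdef, Real.le_log_iff_exp_le hy0]; exact hy
  have ht0 : (0:ℝ) < t := by linarith
  have hLt : 0 < L t := hLpos t ht0
  have hyb : y ^ (-b) = Real.exp (-(b * t)) := by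
    rw [Real.rpow_def_of_pos hy0, ← htdef]; ring_nf
  by_cases hcase : t < T
  -- small range: use μ ≤ 1 and the minimum of g
  · have hgt : g z ≤ g t := hzmin (Set.mem_Icc.mpr ⟨ht1, le_of_lt hcase⟩)
    have h1 : (1:ℝ) ≤ C * y ^ (-b) * t ^ (γ + 1) * L t := by
      have e : C * y ^ (-b) * t ^ (γ + 1) * L t = C * g t := by
        rw [hyb]; simp only [hgdef]; ring
      rw [e]
      have h0C : (0:ℝ) ≤ C := le_trans (by positivity) hCg
      have h2 : 1 / g z * g z ≤ C * g t := mul_le_mul hCg hgt hgz.le h0C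
      rw [one_div, inv_mul_cancel₀ (ne_of_gt hgz)] at h2
      exact h2
    calc μ {x | y ≤ |f x|} ≤ 1 := prob_le_one
    _ = ENNReal.ofReal 1 := ENNReal.ofReal_one.symm
    _ ≤ _ := ENNReal.ofReal_le_ofReal h1
  -- large range: Markov with p = b - 1/t
  · push_neg at hcase
    have htT : T ≤ t := hcase
    have htt₀ : t₀ ≤ t := le_trans hTt₀ htT
    set p : ℝ := b - 1 / t with hpdef
    clear_value p
    have hbp : b - p = 1 / t := by rw [hpdef]; ring
    have hbp0 : 0 < b - p := by rw [hbp]; positivity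
    have hp1 : 1 ≤ p := by
      have h1t : 1 / t ≤ b - 1 := by
        rw [div_le_iff₀ ht0]
        have : 1 / (b - 1) ≤ t := le_trans hTb htT
        rw [div_le_iff₀ (by linarith : (0:ℝ) < b - 1)] at this
        linarith
      rw [hpdef]; linarith
    have hpb : p < b := by
      have h1t : 0 < 1 / t := by positivity
      rw [hpdef]
      linarith
    have hp0 : (0:ℝ) < p := by linarith
    -- Markov inequality
    have hset : {x | y ≤ |f x|} = {x | ENNReal.ofReal y ≤ (‖f x‖₊ : ℝ≥0∞)} := by
      ext x
      simp only [Set.mem_setOf_eq, ← enorm_eq_nnnorm, ← ofReal_norm, Real.norm_eq_abs]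
      exact (ENNReal.ofReal_le_ofReal_iff (abs_nonneg _)).symm
    have hP0 : ENNReal.ofReal p ≠ 0 := (ENNReal.ofReal_pos.mpr hp0).ne'
    have hPt : ENNReal.ofReal p ≠ ∞ := ENNReal.ofReal_ne_top
    have hmark := meas_ge_le_mul_pow_eLpNorm_enorm μ hP0 hPt hf.aestronglyMeasurable
      (ε := ENNReal.ofReal y) (ENNReal.ofReal_pos.mpr hy0).ne' (fun h => absurd h ENNReal.ofReal_ne_top)
    rw [ENNReal.toReal_ofReal hp0.le] at hmark
    rw [hset]
    set M : ℝ := (b - p) ^ (-((γ + 1) / b)) * L (1 / (b - p)) ^ (1 / b) with hMdef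
    have hL1bp : 0 < L (1 / (b - p)) := hLpos _ (by positivity)
    have hM : 0 < M := by simp only [hMdef]; positivity
    clear_value M
    have hstep : μ {x | ENNReal.ofReal y ≤ (‖f x‖₊ : ℝ≥0∞)} ≤
        ENNReal.ofReal (y⁻¹ ^ p * M ^ p) := by
      refine le_trans hmark ?_
      have h2 : eLpNorm f (ENNReal.ofReal p) μ ^ p ≤ ENNReal.ofReal M ^ p := by
        rw [hMdef]
        exact ENNReal.rpow_le_rpow (hmom p hp1 hpb) hp0.le
      calc (ENNReal.ofReal y)⁻¹ ^ p * eLpNorm f (ENNReal.ofReal p) μ ^ p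
          ≤ (ENNReal.ofReal y)⁻¹ ^ p * ENNReal.ofReal M ^ p := by gcongr
        _ = ENNReal.ofReal (y⁻¹ ^ p * M ^ p) := by
          rw [← ENNReal.ofReal_inv_of_pos hy0, ENNReal.ofReal_rpow_of_pos (by positivity),
            ENNReal.ofReal_rpow_of_pos hM, ← ENNReal.ofReal_mul (by positivity)]
    refine le_trans hstep (ENNReal.ofReal_le_ofReal ?_)
    -- now the real-number computation
    have hbpt : 1 / (b - p) = t := by rw [hbp, one_div_one_div]
    -- rewrite M
    have hinv : ((1:ℝ) / t) ^ (-((γ + 1) / b)) = t ^ ((γ + 1) / b) := by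
      rw [one_div, Real.inv_rpow ht0.le, ← Real.rpow_neg ht0.le, neg_neg]
    have hM1 : M = t ^ ((γ + 1) / b) * L t ^ (1 / b) := by
      rw [hMdef, hbp, one_div_one_div, hinv]
    -- K bound : L t ^ (-(1/(b*t))) ≤ K
    have hKbound : L t ^ (-(1 / (b * t))) ≤ K := by
      have hlowt : m / t ≤ L t := hlow t htt₀
      have hlog : Real.log m - Real.log t ≤ Real.log (L t) := by
        have := Real.log_le_log (by positivity) hlowt
        rwa [Real.log_div (ne_of_gt hm) (ne_of_gt ht0)] at this
      have hlogt : Real.log t ≤ t := le_trans (Real.log_le_sub_one_of_pos ht0) (by linarith)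
      rw [Real.rpow_def_of_pos hLt, hKdef]
      apply Real.exp_le_exp.mpr
      have hbt : (0:ℝ) < b * t := by positivity
      have e1 : Real.log (L t) * -(1 / (b * t)) = -Real.log (L t) / (b * t) := by ring
      rw [e1, div_le_div_iff₀ hbt hb0]
      have h1 : -Real.log (L t) ≤ t + |Real.log m| := by
        have := neg_abs_le (Real.log m)
        linarith
      nlinarith [mul_le_mul_of_nonneg_right h1 hb0.le,
        mul_le_mul_of_nonneg_left ht1 (mul_nonneg (abs_nonneg (Real.log m)) hb0.le)]
    -- main chain
    have hyp : y⁻¹ ^ p = Real.exp (-(b * t)) * Real.exp 1 := by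
      rw [Real.inv_rpow hy0.le, ← Real.rpow_neg hy0.le, Real.rpow_def_of_pos hy0, ← htdef,
        ← Real.exp_add]
      congr 1
      have hpt : p * t = b * t - 1 := by
        rw [hpdef, sub_mul, one_div, inv_mul_cancel₀ ht0.ne']
      linear_combination (-1 : ℝ) * hpt
    have hMp : M ^ p = t ^ ((γ + 1) / b * p) * (L t * L t ^ (-(1 / (b * t)))) := by
      rw [hM1, Real.mul_rpow (by positivity) (by positivity), ← Real.rpow_mul ht0.le,
        ← Real.rpow_mul hLt.le]
      congr 1
      have e2 : 1 / b * p = 1 + -(1 / (b * t)) := by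
        rw [hpdef]
        field_simp
        ring
      rw [e2, Real.rpow_add hLt, Real.rpow_one]
    have htexp : t ^ ((γ + 1) / b * p) ≤ t ^ (γ + 1) := by
      apply Real.rpow_le_rpow_of_exponent_le ht1
      rw [div_mul_eq_mul_div, div_le_iff₀ hb0]
      exact mul_le_mul_of_nonneg_left hpb.le hγ1.le
    calc y⁻¹ ^ p * M ^ p
        = (Real.exp 1 * Real.exp (-(b * t))) *
          (t ^ ((γ + 1) / b * p) * (L t * L t ^ (-(1 / (b * t))))) := by
          rw [hyp, hMp]; ring
      _ ≤ (Real.exp 1 * Real.exp (-(b * t))) * (t ^ (γ + 1) * (L t * K)) := by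
          apply mul_le_mul_of_nonneg_left _ (by positivity)
          apply mul_le_mul htexp (mul_le_mul_of_nonneg_left hKbound hLt.le)
            (by positivity) (by positivity)
      _ = (Real.exp 1 * K) * (Real.exp (-(b * t)) * t ^ (γ + 1) * L t) := by ring
      _ ≤ C * (Real.exp (-(b * t)) * t ^ (γ + 1) * L t) := by
          apply mul_le_mul_of_nonneg_right hCK (by positivity)
      _ = C * y ^ (-b) * t ^ (γ + 1) * L t := by rw [hyb]; ring
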